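/- Let (X_1,Y_1), (X_2,Y_2), … be i.i.d. random elements of S^{d1} × S^{d2} and let K be a bounded measurable symmetric kernel on each sphere. Then the empirical distance covariance V_{n,X,Y} = (1/n²) Σ_{i,j} K(X_i,X_j)K(Y_i,Y_j) + (1/n⁴)(Σ_{i,j} K(X_i,X_j))(Σ_{i,j} K(Y_i,Y_j)) − (2/n³) Σ_{i,j,k} K(X_i,X_j)K(Y_i,Y_k) converges almost surely, as n → ∞, to the population distance covariance dCov²_K(X,Y) = E[K(X,X')K(Y,Y')] + E[K(X,X')]E[K(Y,Y')] − 2E[K(X,X')K(Y,Y'')]. -/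

import Mathlib

open MeasureTheory ProbabilityTheory Filter Topology

noncomputable section

set_option linter.unusedSectionVars false
set_option maxHeartbeats 1000000

section Auxiliary

open Finset

lemma my_integrable_of_abs_le {α : Type*} [MeasurableSpace α] {μ : Measure α}
    [IsFiniteMeasure μ] {g : α → ℝ} (hg : AEStronglyMeasurable g μ) {c : ℝ}
    (hc : ∀ x, |g x| ≤ c) : Integrable g μ :=
  (integrable_const c).mono' hg (ae_of_all _ fun x => by simpa [Real.norm_eq_abs] using hc x)

lemma my_tendsto_sqrt_atTop : Tendsto Nat.sqrt atTop atTop := by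
  apply tendsto_atTop_atTop.2
  intro b
  exact ⟨b * b, fun n hn => Nat.le_sqrt.2 hn⟩

lemma my_ae_tendsto_zero {Ω : Type*} [MeasurableSpace Ω] {P : Measure Ω} [IsProbabilityMeasure P]
    (V : ℕ → Ω → ℝ) (hmeas : ∀ k, Measurable (V k))
    (a : ℕ → ℝ) (ha : ∀ k, 0 ≤ a k) (hsum : Summable a)
    (hbd : ∀ k, ∫⁻ ω, ENNReal.ofReal ((V k ω) ^ 2) ∂P ≤ ENNReal.ofReal (a k)) :
    ∀ᵐ ω ∂P, Tendsto (fun k => V k ω) atTop (𝓝 0) := by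
  have hmeas2 : ∀ k, Measurable fun ω => ENNReal.ofReal ((V k ω) ^ 2) := fun k =>
    ((hmeas k).pow_const 2).ennreal_ofReal
  have htot : ∫⁻ ω, ∑' k, ENNReal.ofReal ((V k ω) ^ 2) ∂P ≠ ⊤ := by
    rw [lintegral_tsum fun k => (hmeas2 k).aemeasurable]
    refine ne_top_of_le_ne_top ?_ (ENNReal.tsum_le_tsum hbd)
    rw [← ENNReal.ofReal_tsum_of_nonneg ha hsum]
    exact ENNReal.ofReal_ne_top
  have hae : ∀ᵐ ω ∂P, ∑' k, ENNReal.ofReal ((V k ω) ^ 2) ≠ ⊤ := by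
    filter_upwards [ae_lt_top (by exact Measurable.ennreal_tsum hmeas2) htot] with ω h using h.ne
  filter_upwards [hae] with ω h
  have h1 : Tendsto (fun k => ENNReal.ofReal ((V k ω) ^ 2)) atTop (𝓝 0) :=
    ENNReal.tendsto_atTop_zero_of_tsum_ne_top h
  have h2 : Tendsto (fun k => (V k ω) ^ 2) atTop (𝓝 0) := by
    have := (ENNReal.tendsto_toReal ENNReal.zero_ne_top).comp h1
    simpa [Function.comp_def, ENNReal.toReal_ofReal (sq_nonneg _)] using this
  have h3 : Tendsto (fun k => Real.sqrt ((V k ω) ^ 2)) atTop (𝓝 0) := by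
    simpa [Function.comp_def] using (Real.continuous_sqrt.continuousAt.tendsto.comp h2)
  refine squeeze_zero_norm (fun k => ?_) h3
  rw [Real.sqrt_sq_eq_abs]; exact le_of_eq (Real.norm_eq_abs _)

lemma my_interp (d : ℕ) (hd : 1 ≤ d) (u : ℕ → ℝ) (c : ℝ) (hc : 0 ≤ c)
    (hdiff : ∀ m n : ℕ, m ≤ n → |u n - u m| ≤ c * (n : ℝ) ^ (d - 1) * ((n : ℝ) - (m : ℝ)))
    (hsub : Tendsto (fun k : ℕ => u (k ^ 2) / (k : ℝ) ^ (2 * d)) atTop (𝓝 0)) :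
    Tendsto (fun n : ℕ => u n / (n : ℝ) ^ d) atTop (𝓝 0) := by
  set w : ℕ → ℝ := fun k => |u (k ^ 2) / (k : ℝ) ^ (2 * d)| + 2 * c / (k : ℝ) with hw_def
  have hw : Tendsto w atTop (𝓝 0) := by
    have h1 : Tendsto (fun k : ℕ => |u (k ^ 2) / (k : ℝ) ^ (2 * d)|) atTop (𝓝 0) := by
      simpa using hsub.abs
    simpa using h1.add (tendsto_const_div_atTop_nhds_zero_nat (2 * c))
  refine squeeze_zero_norm' ?_ (hw.comp my_tendsto_sqrt_atTop)
  filter_upwards [eventually_ge_atTop 1] with n hn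
  obtain ⟨k, hk⟩ : ∃ k, Nat.sqrt n = k := ⟨_, rfl⟩
  have hk1 : 1 ≤ k := hk ▸ Nat.le_sqrt.2 (by simpa using hn)
  have hkk : k * k ≤ n := hk ▸ Nat.sqrt_le n
  have hnk : n ≤ k * k + 2 * k := by have h := Nat.sqrt_le_add n; rw [hk] at h; omega
  have hkR : (1 : ℝ) ≤ (k : ℝ) := by exact_mod_cast hk1
  have hkkR : ((k : ℝ)) * k ≤ (n : ℝ) := by exact_mod_cast hkk
  have hnR : (1 : ℝ) ≤ (n : ℝ) := by exact_mod_cast hn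
  have hnpos : (0 : ℝ) < (n : ℝ) ^ d := by positivity
  have hkpos : (0 : ℝ) < (k : ℝ) := by linarith
  have hn0 : (n : ℝ) ≠ 0 := by linarith
  have hk0 : (k : ℝ) ≠ 0 := ne_of_gt hkpos
  have hb : |u n - u (k * k)| ≤ c * (n : ℝ) ^ (d - 1) * (2 * k) := by
    refine (hdiff (k * k) n hkk).trans ?_
    have h2 : (n : ℝ) - ((k * k : ℕ) : ℝ) ≤ 2 * k := by
      push_cast
      have : (n : ℝ) ≤ k * k + 2 * k := by exact_mod_cast hnk
      linarith
    have hnn : (0 : ℝ) ≤ c * (n : ℝ) ^ (d - 1) := by positivity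
    exact mul_le_mul_of_nonneg_left h2 hnn
  have habs : |u n| ≤ |u (k * k)| + c * (n : ℝ) ^ (d - 1) * (2 * k) := by
    have := abs_sub_abs_le_abs_sub (u n) (u (k * k))
    linarith [hb, abs_sub_abs_le_abs_sub (u n) (u (k * k))]
  have e1 : (n : ℝ) ^ d = (n : ℝ) ^ (d - 1) * n := by
    rw [← pow_succ]; congr 1; omega
  have t2 : c * (n : ℝ) ^ (d - 1) * (2 * k) / (n : ℝ) ^ d = 2 * c * k / n := by
    rw [e1]; rw [mul_comm ((n:ℝ) ^ (d-1)) (n:ℝ), ← div_div]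
    rw [mul_div_assoc (c * (n:ℝ)^(d-1)) _ _]
    field_simp
  have t2b : 2 * c * (k : ℝ) / n ≤ 2 * c / k := by
    rw [div_le_div_iff₀ (by linarith) hkpos]
    nlinarith
  have t1 : |u (k * k)| / (n : ℝ) ^ d ≤ |u (k * k)| / (k : ℝ) ^ (2 * d) := by
    have hle : (k : ℝ) ^ (2 * d) ≤ (n : ℝ) ^ d := by
      rw [pow_mul]
      exact pow_le_pow_left₀ (by positivity) (by rw [sq]; exact hkkR) d
    have hkd : (0 : ℝ) < (k : ℝ) ^ (2 * d) := by positivity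
    exact div_le_div_of_nonneg_left (abs_nonneg _) hkd hle
  have : ‖u n / (n : ℝ) ^ d‖ = |u n| / (n : ℝ) ^ d := by
    rw [Real.norm_eq_abs, abs_div, abs_of_pos hnpos]
  rw [this]
  show _ ≤ w (Nat.sqrt n)
  have hchain : |u n| / (n : ℝ) ^ d ≤ |u (k * k)| / (k : ℝ) ^ (2 * d) + 2 * c / k := by
    calc |u n| / (n : ℝ) ^ d ≤ (|u (k * k)| + c * (n : ℝ) ^ (d - 1) * (2 * k)) / (n : ℝ) ^ d := by
          gcongr
      _ = |u (k * k)| / (n : ℝ) ^ d + c * (n : ℝ) ^ (d - 1) * (2 * k) / (n : ℝ) ^ d := by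
          rw [add_div]
      _ ≤ |u (k * k)| / (k : ℝ) ^ (2 * d) + 2 * c / k := by
          rw [t2]; exact add_le_add t1 t2b
  have hwk : w k = |u (k * k)| / (k : ℝ) ^ (2 * d) + 2 * c / k := by
    simp only [hw_def]
    rw [sq, abs_div, abs_of_pos (show (0:ℝ) < (k:ℝ) ^ (2*d) by positivity)]
  rw [hk, hwk]
  exact hchain

lemma my_card_or {α : Type*} [DecidableEq α] (s : Finset α) (p q : α → Prop) [DecidablePred p] [DecidablePred q]
    {k l : ℕ} (hp : (s.filter p).card ≤ k) (hq : (s.filter q).card ≤ l) :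
    (s.filter fun x => p x ∨ q x).card ≤ k + l := by
  rw [Finset.filter_or]; exact le_trans (Finset.card_union_le _ _) (add_le_add hp hq)


section Core
variable {Ω : Type*} [MeasurableSpace Ω] {P : Measure Ω} [IsProbabilityMeasure P]
variable {E : Type*} {mE : MeasurableSpace E} {Z : ℕ → Ω → E}

lemma my_pair_law (hZ : ∀ i, Measurable (Z i))
    (hindep : iIndepFun Z P) (hid : ∀ i, IdentDistrib (Z i) (Z 0) P P)
    {i j : ℕ} (hij : i ≠ j) :
    P.map (fun ω => (Z i ω, Z j ω)) = (P.map (Z 0)).prod (P.map (Z 0)) := by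
  have h := hindep.indepFun hij
  rw [indepFun_iff_map_prod_eq_prod_map_map ((hZ i).aemeasurable) ((hZ j).aemeasurable)] at h
  rw [h, (hid i).map_eq, (hid j).map_eq]

lemma my_triple_law (hZ : ∀ i, Measurable (Z i))
    (hindep : iIndepFun Z P) (hid : ∀ i, IdentDistrib (Z i) (Z 0) P P)
    {i j k : ℕ} (hij : i ≠ j) (hik : i ≠ k) (hjk : j ≠ k) :
    P.map (fun ω => (Z i ω, Z j ω, Z k ω))
      = (P.map (Z 0)).prod ((P.map (Z 0)).prod (P.map (Z 0))) := by
  have hpair := my_pair_law hZ hindep hid hjk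
  have h1 : IndepFun (fun ω => (Z j ω, Z k ω)) (Z i) P :=
    hindep.indepFun_prodMk hZ j k i hij.symm hik.symm
  have h2 := h1.symm
  rw [indepFun_iff_map_prod_eq_prod_map_map ((hZ i).aemeasurable)
    (((hZ j).prodMk (hZ k)).aemeasurable)] at h2
  rw [h2, (hid i).map_eq, hpair]

lemma my_integral_pair (hZ : ∀ i, Measurable (Z i))
    (hindep : iIndepFun Z P) (hid : ∀ i, IdentDistrib (Z i) (Z 0) P P)
    {g : E → E → ℝ} (hg : Measurable (Function.uncurry g))
    {c : ℝ} (hc : ∀ x y, |g x y| ≤ c) {i j : ℕ} (hij : i ≠ j) :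
    ∫ ω, g (Z i ω) (Z j ω) ∂P = ∫ x, ∫ y, g x y ∂(P.map (Z 0)) ∂(P.map (Z 0)) := by
  have hmeas_pair : Measurable fun ω => (Z i ω, Z j ω) := (hZ i).prodMk (hZ j)
  have h1 : ∫ ω, g (Z i ω) (Z j ω) ∂P
      = ∫ p, Function.uncurry g p ∂(P.map (fun ω => (Z i ω, Z j ω))) := by
    rw [integral_map hmeas_pair.aemeasurable hg.aestronglyMeasurable]
    rfl
  rw [h1, my_pair_law hZ hindep hid hij,
    integral_prod _ (my_integrable_of_abs_le hg.aestronglyMeasurable (fun p => hc p.1 p.2))]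
  rfl

lemma my_integral_triple (hZ : ∀ i, Measurable (Z i))
    (hindep : iIndepFun Z P) (hid : ∀ i, IdentDistrib (Z i) (Z 0) P P)
    {g : E → E → E → ℝ} (hg : Measurable (fun p : E × E × E => g p.1 p.2.1 p.2.2))
    {c : ℝ} (hc : ∀ x y z, |g x y z| ≤ c) {i j k : ℕ} (hij : i ≠ j) (hik : i ≠ k) (hjk : j ≠ k) :
    ∫ ω, g (Z i ω) (Z j ω) (Z k ω) ∂P
      = ∫ x, ∫ y, ∫ z, g x y z ∂(P.map (Z 0)) ∂(P.map (Z 0)) ∂(P.map (Z 0)) := by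
  set ν := P.map (Z 0) with hν
  haveI : IsProbabilityMeasure ν := Measure.isProbabilityMeasure_map (hZ 0).aemeasurable
  have hmeas_tr : Measurable fun ω => (Z i ω, Z j ω, Z k ω) :=
    (hZ i).prodMk ((hZ j).prodMk (hZ k))
  have h1 : ∫ ω, g (Z i ω) (Z j ω) (Z k ω) ∂P
      = ∫ p, g p.1 p.2.1 p.2.2 ∂(P.map (fun ω => (Z i ω, Z j ω, Z k ω))) := by
    rw [integral_map hmeas_tr.aemeasurable hg.aestronglyMeasurable]
  have hint : Integrable (fun p : E × E × E => g p.1 p.2.1 p.2.2) (ν.prod (ν.prod ν)) :=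
    my_integrable_of_abs_le hg.aestronglyMeasurable (fun p => hc _ _ _)
  rw [h1, my_triple_law hZ hindep hid hij hik hjk, integral_prod _ hint]
  congr 1
  funext x
  have hgx : Measurable (fun q : E × E => g x q.1 q.2) :=
    hg.comp (measurable_const.prodMk measurable_id)
  rw [integral_prod _ (my_integrable_of_abs_le hgx.aestronglyMeasurable (fun q => hc _ _ _))]

lemma my_indep_triple_triple (hZ : ∀ i, Measurable (Z i))
    (hindep : iIndepFun Z P)
    {i j k a b c : ℕ} (h1 : i ≠ a) (h2 : i ≠ b) (h3 : i ≠ c)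
    (h4 : j ≠ a) (h5 : j ≠ b) (h6 : j ≠ c) (h7 : k ≠ a) (h8 : k ≠ b) (h9 : k ≠ c) :
    IndepFun (fun ω => (Z i ω, Z j ω, Z k ω)) (fun ω => (Z a ω, Z b ω, Z c ω)) P := by
  classical
  let g (i j k : ℕ) (v : ({i, j, k} : Finset ℕ) → E) : E × E × E :=
    (v ⟨i, by simp⟩, v ⟨j, by simp⟩, v ⟨k, by simp⟩)
  have hg : ∀ i j k : ℕ, Measurable (g i j k) := fun i j k =>
    ((measurable_pi_apply _).prodMk ((measurable_pi_apply _).prodMk (measurable_pi_apply _)))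
  have hdisj : Disjoint ({i, j, k} : Finset ℕ) ({a, b, c} : Finset ℕ) := by
    simp only [Finset.disjoint_left, Finset.mem_insert, Finset.mem_singleton]
    omega
  exact (hindep.indepFun_finset {i, j, k} {a, b, c} hdisj hZ).comp (hg i j k) (hg a b c)

lemma my_sq_bound2 (hZ : ∀ i, Measurable (Z i))
    (hindep : iIndepFun Z P)
    {h : E → E → ℝ} (hh : Measurable (Function.uncurry h)) {c : ℝ} (hc0 : 0 ≤ c)
    (hc : ∀ x y, |h x y| ≤ c)
    (hmean : ∀ i j : ℕ, i ≠ j → ∫ ω, h (Z i ω) (Z j ω) ∂P = 0) (n : ℕ) :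
    ∫ ω, (∑ p ∈ (Finset.range n).offDiag, h (Z p.1 ω) (Z p.2 ω)) ^ 2 ∂P
      ≤ 4 * c ^ 2 * (n : ℝ) ^ 3 := by
  classical
  set s := (Finset.range n).offDiag with hs
  set a : ℕ × ℕ → Ω → ℝ := fun p ω => h (Z p.1 ω) (Z p.2 ω) with ha
  have hameas : ∀ p, Measurable (a p) := fun p => hh.comp ((hZ p.1).prodMk (hZ p.2))
  have habd : ∀ p ω, |a p ω| ≤ c := fun p ω => hc _ _
  have hprodbd : ∀ p q ω, |a p ω * a q ω| ≤ c ^ 2 := fun p q ω => by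
    rw [abs_mul, sq]; exact mul_le_mul (habd p ω) (habd q ω) (abs_nonneg _) hc0
  have hint : ∀ p q : ℕ × ℕ, Integrable (fun ω => a p ω * a q ω) P := fun p q =>
    my_integrable_of_abs_le ((hameas p).mul (hameas q)).aestronglyMeasurable
      (fun ω => hprodbd p q ω)
  have hexpand : (fun ω => (∑ p ∈ s, a p ω) ^ 2)
      = fun ω => ∑ pq ∈ s ×ˢ s, a pq.1 ω * a pq.2 ω := by
    funext ω
    rw [sq, Finset.sum_mul_sum, Finset.sum_product]
  rw [show (fun ω => (∑ p ∈ s, h (Z p.1 ω) (Z p.2 ω)) ^ 2) = fun ω => (∑ p ∈ s, a p ω) ^ 2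
      from rfl, hexpand, integral_finset_sum _ (fun pq _ => hint pq.1 pq.2)]
  set Good : (ℕ × ℕ) × ℕ × ℕ → Prop :=
    fun pq => pq.1.1 = pq.2.1 ∨ pq.1.1 = pq.2.2 ∨ pq.1.2 = pq.2.1 ∨ pq.1.2 = pq.2.2 with hGood
  rw [← Finset.sum_filter_add_sum_filter_not (s ×ˢ s) Good]
  have hzero : ∑ pq ∈ (s ×ˢ s).filter (fun pq => ¬ Good pq),
      ∫ ω, a pq.1 ω * a pq.2 ω ∂P = 0 := by
    apply Finset.sum_eq_zero
    rintro ⟨p, q⟩ hpq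
    rw [Finset.mem_filter, Finset.mem_product] at hpq
    obtain ⟨⟨hp, hq⟩, hng⟩ := hpq
    simp only [hGood, not_or] at hng
    obtain ⟨h1, h2, h3, h4⟩ := hng
    have hij : p.1 ≠ p.2 := (Finset.mem_offDiag.1 hp).2.2
    have hindep2 : IndepFun (fun ω => (Z p.1 ω, Z p.2 ω)) (fun ω => (Z q.1 ω, Z q.2 ω)) P :=
      hindep.indepFun_prodMk_prodMk hZ p.1 p.2 q.1 q.2 h1 h2 h3 h4
    have hIF : IndepFun (a p) (a q) P := hindep2.comp hh hh
    have := hIF.integral_mul_eq_mul_integral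
      (hameas p).aestronglyMeasurable
      (hameas q).aestronglyMeasurable
    have heq : ∫ ω, a p ω * a q ω ∂P = (∫ ω, a p ω ∂P) * ∫ ω, a q ω ∂P := this
    rw [heq, hmean p.1 p.2 hij, zero_mul]
  rw [hzero, add_zero]
  -- count
  have hcard : (((s ×ˢ s).filter Good).card : ℝ) ≤ 4 * (n : ℝ) ^ 3 := by
    have hsplit : (s ×ˢ s).filter Good
        = ((s ×ˢ s).filter fun pq => pq.1.1 = pq.2.1)
          ∪ (((s ×ˢ s).filter fun pq => pq.1.1 = pq.2.2)
          ∪ (((s ×ˢ s).filter fun pq => pq.1.2 = pq.2.1)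
          ∪ ((s ×ˢ s).filter fun pq => pq.1.2 = pq.2.2))) := by
      simp only [hGood]
      rw [Finset.filter_or, Finset.filter_or, Finset.filter_or]
    have hmemt : ∀ pq ∈ s ×ˢ s, (pq.1, pq.2.1) ∈ (Finset.range n ×ˢ Finset.range n) ×ˢ Finset.range n
        ∧ (pq.1, pq.2.2) ∈ (Finset.range n ×ˢ Finset.range n) ×ˢ Finset.range n := by
      rintro ⟨⟨p1, p2⟩, q1, q2⟩ hmem
      rw [Finset.mem_product] at hmem
      obtain ⟨hp, hq⟩ := hmem
      rw [hs, Finset.mem_offDiag] at hp hq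
      simp only [Finset.mem_product]
      exact ⟨⟨⟨hp.1, hp.2.1⟩, hq.1⟩, ⟨⟨hp.1, hp.2.1⟩, hq.2.1⟩⟩
    have hcard_t : (((Finset.range n ×ˢ Finset.range n) ×ˢ Finset.range n).card) = n ^ 3 := by
      simp [Finset.card_product]; ring
    have hb1 : ((s ×ˢ s).filter fun pq => pq.1.1 = pq.2.1).card ≤ n ^ 3 := by
      rw [← hcard_t]
      apply Finset.card_le_card_of_injOn (fun pq => (pq.1, pq.2.2))
      · intro pq hmem
        exact (hmemt pq (Finset.mem_filter.1 hmem).1).2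
      · rintro ⟨⟨p1, p2⟩, q1, q2⟩ hm1 ⟨⟨p1', p2'⟩, q1', q2'⟩ hm2 heq
        simp only [Finset.coe_filter, Set.mem_setOf_eq] at hm1 hm2
        simp only [Prod.mk.injEq] at heq ⊢
        refine ⟨⟨heq.1.1, heq.1.2⟩, ?_, heq.2⟩
        omega
    have hb2 : ((s ×ˢ s).filter fun pq => pq.1.1 = pq.2.2).card ≤ n ^ 3 := by
      rw [← hcard_t]
      apply Finset.card_le_card_of_injOn (fun pq => (pq.1, pq.2.1))
      · intro pq hmem
        exact (hmemt pq (Finset.mem_filter.1 hmem).1).1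
      · rintro ⟨⟨p1, p2⟩, q1, q2⟩ hm1 ⟨⟨p1', p2'⟩, q1', q2'⟩ hm2 heq
        simp only [Finset.coe_filter, Set.mem_setOf_eq] at hm1 hm2
        simp only [Prod.mk.injEq] at heq ⊢
        refine ⟨⟨heq.1.1, heq.1.2⟩, heq.2, ?_⟩
        omega
    have hb3 : ((s ×ˢ s).filter fun pq => pq.1.2 = pq.2.1).card ≤ n ^ 3 := by
      rw [← hcard_t]
      apply Finset.card_le_card_of_injOn (fun pq => (pq.1, pq.2.2))
      · intro pq hmem
        exact (hmemt pq (Finset.mem_filter.1 hmem).1).2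
      · rintro ⟨⟨p1, p2⟩, q1, q2⟩ hm1 ⟨⟨p1', p2'⟩, q1', q2'⟩ hm2 heq
        simp only [Finset.coe_filter, Set.mem_setOf_eq] at hm1 hm2
        simp only [Prod.mk.injEq] at heq ⊢
        refine ⟨⟨heq.1.1, heq.1.2⟩, ?_, heq.2⟩
        omega
    have hb4 : ((s ×ˢ s).filter fun pq => pq.1.2 = pq.2.2).card ≤ n ^ 3 := by
      rw [← hcard_t]
      apply Finset.card_le_card_of_injOn (fun pq => (pq.1, pq.2.1))
      · intro pq hmem
        exact (hmemt pq (Finset.mem_filter.1 hmem).1).1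
      · rintro ⟨⟨p1, p2⟩, q1, q2⟩ hm1 ⟨⟨p1', p2'⟩, q1', q2'⟩ hm2 heq
        simp only [Finset.coe_filter, Set.mem_setOf_eq] at hm1 hm2
        simp only [Prod.mk.injEq] at heq ⊢
        refine ⟨⟨heq.1.1, heq.1.2⟩, heq.2, ?_⟩
        omega
    have : ((s ×ˢ s).filter Good).card ≤ 4 * n ^ 3 := by
      rw [hsplit]
      calc _ ≤ _ := Finset.card_union_le _ _
        _ ≤ n^3 + (n^3 + (n^3 + n^3)) := by
            gcongr
            calc _ ≤ _ := Finset.card_union_le _ _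
              _ ≤ n^3 + (n^3 + n^3) := by
                  gcongr
                  calc _ ≤ _ := Finset.card_union_le _ _
                    _ ≤ n^3 + n^3 := by gcongr
        _ = 4 * n ^ 3 := by ring
    calc (((s ×ˢ s).filter Good).card : ℝ) ≤ ((4 * n ^ 3 : ℕ) : ℝ) := by exact_mod_cast this
      _ = 4 * (n : ℝ) ^ 3 := by push_cast; ring
  calc ∑ pq ∈ (s ×ˢ s).filter Good, ∫ ω, a pq.1 ω * a pq.2 ω ∂P
      ≤ ∑ pq ∈ (s ×ˢ s).filter Good, c ^ 2 := by
        apply Finset.sum_le_sum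
        intro pq _
        have : ‖∫ ω, a pq.1 ω * a pq.2 ω ∂P‖ ≤ c ^ 2 * (P Set.univ).toReal := by
          apply norm_integral_le_of_norm_le_const
          exact ae_of_all _ fun ω => by
            rw [Real.norm_eq_abs]; exact hprodbd pq.1 pq.2 ω
        rw [measure_univ, ENNReal.toReal_one, mul_one, Real.norm_eq_abs] at this
        exact (le_abs_self _).trans this
    _ = (((s ×ˢ s).filter Good).card : ℝ) * c ^ 2 := by rw [Finset.sum_const, nsmul_eq_mul]
    _ ≤ 4 * (n : ℝ) ^ 3 * c ^ 2 := by
        apply mul_le_mul_of_nonneg_right hcard (sq_nonneg c)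
    _ = 4 * c ^ 2 * (n : ℝ) ^ 3 := by ring


lemma my_sq_bound3 (hZ : ∀ i, Measurable (Z i))
    (hindep : iIndepFun Z P)
    {h : E → E → E → ℝ} (hh : Measurable fun p : E × E × E => h p.1 p.2.1 p.2.2)
    {c : ℝ} (hc0 : 0 ≤ c) (hc : ∀ x y z, |h x y z| ≤ c)
    (hmean : ∀ i j k : ℕ, i ≠ j → i ≠ k → j ≠ k → ∫ ω, h (Z i ω) (Z j ω) (Z k ω) ∂P = 0)
    (n : ℕ) :
    ∫ ω, (∑ t ∈ (Finset.range n ×ˢ (Finset.range n ×ˢ Finset.range n)).filter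
        (fun t => t.1 ≠ t.2.1 ∧ t.1 ≠ t.2.2 ∧ t.2.1 ≠ t.2.2),
        h (Z t.1 ω) (Z t.2.1 ω) (Z t.2.2 ω)) ^ 2 ∂P
      ≤ 9 * c ^ 2 * (n : ℝ) ^ 5 := by
  classical
  set D := (Finset.range n ×ˢ (Finset.range n ×ˢ Finset.range n)).filter
      (fun t => t.1 ≠ t.2.1 ∧ t.1 ≠ t.2.2 ∧ t.2.1 ≠ t.2.2) with hD
  set a : ℕ × ℕ × ℕ → Ω → ℝ := fun t ω => h (Z t.1 ω) (Z t.2.1 ω) (Z t.2.2 ω) with ha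
  have hameas : ∀ t, Measurable (a t) := fun t =>
    hh.comp ((hZ t.1).prodMk ((hZ t.2.1).prodMk (hZ t.2.2)))
  have habd : ∀ t ω, |a t ω| ≤ c := fun t ω => hc _ _ _
  have hprodbd : ∀ t u ω, |a t ω * a u ω| ≤ c ^ 2 := fun t u ω => by
    rw [abs_mul, sq]; exact mul_le_mul (habd t ω) (habd u ω) (abs_nonneg _) hc0
  have hint : ∀ t u : ℕ × ℕ × ℕ, Integrable (fun ω => a t ω * a u ω) P := fun t u =>
    my_integrable_of_abs_le ((hameas t).mul (hameas u)).aestronglyMeasurable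
      (fun ω => hprodbd t u ω)
  have hexpand : (fun ω => (∑ t ∈ D, a t ω) ^ 2)
      = fun ω => ∑ pq ∈ D ×ˢ D, a pq.1 ω * a pq.2 ω := by
    funext ω
    rw [sq, Finset.sum_mul_sum, Finset.sum_product]
  rw [show (fun ω => (∑ t ∈ D, h (Z t.1 ω) (Z t.2.1 ω) (Z t.2.2 ω)) ^ 2)
      = fun ω => (∑ t ∈ D, a t ω) ^ 2 from rfl, hexpand,
    integral_finset_sum _ (fun pq _ => hint pq.1 pq.2)]
  set Good : (ℕ × ℕ × ℕ) × ℕ × ℕ × ℕ → Prop := fun pq =>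
    pq.1.1 = pq.2.1 ∨ pq.1.1 = pq.2.2.1 ∨ pq.1.1 = pq.2.2.2
    ∨ pq.1.2.1 = pq.2.1 ∨ pq.1.2.1 = pq.2.2.1 ∨ pq.1.2.1 = pq.2.2.2
    ∨ pq.1.2.2 = pq.2.1 ∨ pq.1.2.2 = pq.2.2.1 ∨ pq.1.2.2 = pq.2.2.2 with hGood
  rw [← Finset.sum_filter_add_sum_filter_not (D ×ˢ D) Good]
  have hzero : ∑ pq ∈ (D ×ˢ D).filter (fun pq => ¬ Good pq),
      ∫ ω, a pq.1 ω * a pq.2 ω ∂P = 0 := by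
    apply Finset.sum_eq_zero
    rintro ⟨p, q⟩ hpq
    rw [Finset.mem_filter, Finset.mem_product] at hpq
    obtain ⟨⟨hp, hq⟩, hng⟩ := hpq
    simp only [hGood, not_or] at hng
    obtain ⟨g1, g2, g3, g4, g5, g6, g7, g8, g9⟩ := hng
    rw [hD, Finset.mem_filter] at hp
    obtain ⟨-, hp1, hp2, hp3⟩ := hp
    have hindep2 : IndepFun (fun ω => (Z p.1 ω, Z p.2.1 ω, Z p.2.2 ω))
        (fun ω => (Z q.1 ω, Z q.2.1 ω, Z q.2.2 ω)) P :=
      my_indep_triple_triple hZ hindep g1 g2 g3 g4 g5 g6 g7 g8 g9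
    have hIF : IndepFun (a p) (a q) P := hindep2.comp hh hh
    have heq : ∫ ω, a p ω * a q ω ∂P = (∫ ω, a p ω ∂P) * ∫ ω, a q ω ∂P :=
      hIF.integral_mul_eq_mul_integral
        (hameas p).aestronglyMeasurable
        (hameas q).aestronglyMeasurable
    rw [heq, hmean p.1 p.2.1 p.2.2 hp1 hp2 hp3, zero_mul]
  rw [hzero, add_zero]
  have hcard_t : (((Finset.range n ×ˢ (Finset.range n ×ˢ Finset.range n))
      ×ˢ (Finset.range n ×ˢ Finset.range n)).card) = n ^ 5 := by
    simp [Finset.card_product]; ring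
  have hb11 : ((D ×ˢ D).filter fun pq => pq.1.1 = pq.2.1).card ≤ n ^ 5 := by
    rw [← hcard_t]
    apply Finset.card_le_card_of_injOn (fun pq => (pq.1, (pq.2.2.1, pq.2.2.2)))
    · rintro ⟨⟨p1, p2, p3⟩, ⟨q1, q2, q3⟩⟩ hmem
      simp only [Finset.mem_coe, hD, Finset.mem_filter, Finset.mem_product, Finset.mem_range] at hmem ⊢
      omega
    · rintro ⟨⟨p1, p2, p3⟩, ⟨q1, q2, q3⟩⟩ hm1 ⟨⟨p1', p2', p3'⟩, ⟨q1', q2', q3'⟩⟩ hm2 heq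
      simp only [Finset.mem_coe, hD, Finset.mem_filter, Finset.mem_product,
        Finset.mem_range] at hm1 hm2
      simp only [Prod.mk.injEq] at heq ⊢
      omega
  have hb12 : ((D ×ˢ D).filter fun pq => pq.1.1 = pq.2.2.1).card ≤ n ^ 5 := by
    rw [← hcard_t]
    apply Finset.card_le_card_of_injOn (fun pq => (pq.1, (pq.2.1, pq.2.2.2)))
    · rintro ⟨⟨p1, p2, p3⟩, ⟨q1, q2, q3⟩⟩ hmem
      simp only [Finset.mem_coe, hD, Finset.mem_filter, Finset.mem_product, Finset.mem_range] at hmem ⊢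
      omega
    · rintro ⟨⟨p1, p2, p3⟩, ⟨q1, q2, q3⟩⟩ hm1 ⟨⟨p1', p2', p3'⟩, ⟨q1', q2', q3'⟩⟩ hm2 heq
      simp only [Finset.mem_coe, hD, Finset.mem_filter, Finset.mem_product,
        Finset.mem_range] at hm1 hm2
      simp only [Prod.mk.injEq] at heq ⊢
      omega
  have hb13 : ((D ×ˢ D).filter fun pq => pq.1.1 = pq.2.2.2).card ≤ n ^ 5 := by
    rw [← hcard_t]
    apply Finset.card_le_card_of_injOn (fun pq => (pq.1, (pq.2.1, pq.2.2.1)))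
    · rintro ⟨⟨p1, p2, p3⟩, ⟨q1, q2, q3⟩⟩ hmem
      simp only [Finset.mem_coe, hD, Finset.mem_filter, Finset.mem_product, Finset.mem_range] at hmem ⊢
      omega
    · rintro ⟨⟨p1, p2, p3⟩, ⟨q1, q2, q3⟩⟩ hm1 ⟨⟨p1', p2', p3'⟩, ⟨q1', q2', q3'⟩⟩ hm2 heq
      simp only [Finset.mem_coe, hD, Finset.mem_filter, Finset.mem_product,
        Finset.mem_range] at hm1 hm2
      simp only [Prod.mk.injEq] at heq ⊢
      omega
  have hb21 : ((D ×ˢ D).filter fun pq => pq.1.2.1 = pq.2.1).card ≤ n ^ 5 := by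
    rw [← hcard_t]
    apply Finset.card_le_card_of_injOn (fun pq => (pq.1, (pq.2.2.1, pq.2.2.2)))
    · rintro ⟨⟨p1, p2, p3⟩, ⟨q1, q2, q3⟩⟩ hmem
      simp only [Finset.mem_coe, hD, Finset.mem_filter, Finset.mem_product, Finset.mem_range] at hmem ⊢
      omega
    · rintro ⟨⟨p1, p2, p3⟩, ⟨q1, q2, q3⟩⟩ hm1 ⟨⟨p1', p2', p3'⟩, ⟨q1', q2', q3'⟩⟩ hm2 heq
      simp only [Finset.mem_coe, hD, Finset.mem_filter, Finset.mem_product,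
        Finset.mem_range] at hm1 hm2
      simp only [Prod.mk.injEq] at heq ⊢
      omega
  have hb22 : ((D ×ˢ D).filter fun pq => pq.1.2.1 = pq.2.2.1).card ≤ n ^ 5 := by
    rw [← hcard_t]
    apply Finset.card_le_card_of_injOn (fun pq => (pq.1, (pq.2.1, pq.2.2.2)))
    · rintro ⟨⟨p1, p2, p3⟩, ⟨q1, q2, q3⟩⟩ hmem
      simp only [Finset.mem_coe, hD, Finset.mem_filter, Finset.mem_product, Finset.mem_range] at hmem ⊢
      omega
    · rintro ⟨⟨p1, p2, p3⟩, ⟨q1, q2, q3⟩⟩ hm1 ⟨⟨p1', p2', p3'⟩, ⟨q1', q2', q3'⟩⟩ hm2 heq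
      simp only [Finset.mem_coe, hD, Finset.mem_filter, Finset.mem_product,
        Finset.mem_range] at hm1 hm2
      simp only [Prod.mk.injEq] at heq ⊢
      omega
  have hb23 : ((D ×ˢ D).filter fun pq => pq.1.2.1 = pq.2.2.2).card ≤ n ^ 5 := by
    rw [← hcard_t]
    apply Finset.card_le_card_of_injOn (fun pq => (pq.1, (pq.2.1, pq.2.2.1)))
    · rintro ⟨⟨p1, p2, p3⟩, ⟨q1, q2, q3⟩⟩ hmem
      simp only [Finset.mem_coe, hD, Finset.mem_filter, Finset.mem_product, Finset.mem_range] at hmem ⊢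
      omega
    · rintro ⟨⟨p1, p2, p3⟩, ⟨q1, q2, q3⟩⟩ hm1 ⟨⟨p1', p2', p3'⟩, ⟨q1', q2', q3'⟩⟩ hm2 heq
      simp only [Finset.mem_coe, hD, Finset.mem_filter, Finset.mem_product,
        Finset.mem_range] at hm1 hm2
      simp only [Prod.mk.injEq] at heq ⊢
      omega
  have hb31 : ((D ×ˢ D).filter fun pq => pq.1.2.2 = pq.2.1).card ≤ n ^ 5 := by
    rw [← hcard_t]
    apply Finset.card_le_card_of_injOn (fun pq => (pq.1, (pq.2.2.1, pq.2.2.2)))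
    · rintro ⟨⟨p1, p2, p3⟩, ⟨q1, q2, q3⟩⟩ hmem
      simp only [Finset.mem_coe, hD, Finset.mem_filter, Finset.mem_product, Finset.mem_range] at hmem ⊢
      omega
    · rintro ⟨⟨p1, p2, p3⟩, ⟨q1, q2, q3⟩⟩ hm1 ⟨⟨p1', p2', p3'⟩, ⟨q1', q2', q3'⟩⟩ hm2 heq
      simp only [Finset.mem_coe, hD, Finset.mem_filter, Finset.mem_product,
        Finset.mem_range] at hm1 hm2
      simp only [Prod.mk.injEq] at heq ⊢
      omega
  have hb32 : ((D ×ˢ D).filter fun pq => pq.1.2.2 = pq.2.2.1).card ≤ n ^ 5 := by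
    rw [← hcard_t]
    apply Finset.card_le_card_of_injOn (fun pq => (pq.1, (pq.2.1, pq.2.2.2)))
    · rintro ⟨⟨p1, p2, p3⟩, ⟨q1, q2, q3⟩⟩ hmem
      simp only [Finset.mem_coe, hD, Finset.mem_filter, Finset.mem_product, Finset.mem_range] at hmem ⊢
      omega
    · rintro ⟨⟨p1, p2, p3⟩, ⟨q1, q2, q3⟩⟩ hm1 ⟨⟨p1', p2', p3'⟩, ⟨q1', q2', q3'⟩⟩ hm2 heq
      simp only [Finset.mem_coe, hD, Finset.mem_filter, Finset.mem_product,
        Finset.mem_range] at hm1 hm2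
      simp only [Prod.mk.injEq] at heq ⊢
      omega
  have hb33 : ((D ×ˢ D).filter fun pq => pq.1.2.2 = pq.2.2.2).card ≤ n ^ 5 := by
    rw [← hcard_t]
    apply Finset.card_le_card_of_injOn (fun pq => (pq.1, (pq.2.1, pq.2.2.1)))
    · rintro ⟨⟨p1, p2, p3⟩, ⟨q1, q2, q3⟩⟩ hmem
      simp only [Finset.mem_coe, hD, Finset.mem_filter, Finset.mem_product, Finset.mem_range] at hmem ⊢
      omega
    · rintro ⟨⟨p1, p2, p3⟩, ⟨q1, q2, q3⟩⟩ hm1 ⟨⟨p1', p2', p3'⟩, ⟨q1', q2', q3'⟩⟩ hm2 heq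
      simp only [Finset.mem_coe, hD, Finset.mem_filter, Finset.mem_product,
        Finset.mem_range] at hm1 hm2
      simp only [Prod.mk.injEq] at heq ⊢
      omega
  have hle : ((D ×ˢ D).filter Good).card ≤ 9 * n ^ 5 := by
    have := (my_card_or _ _ _ hb11 (my_card_or _ _ _ hb12 (my_card_or _ _ _ hb13 (my_card_or _ _ _ hb21 (my_card_or _ _ _ hb22 (my_card_or _ _ _ hb23 (my_card_or _ _ _ hb31 (my_card_or _ _ _ hb32 hb33))))))))
    simp only [hGood]
    refine le_trans ?_ (le_of_eq (by ring : n^5 + (n^5 + (n^5 + (n^5 + (n^5 + (n^5 + (n^5 + (n^5 + n^5))))))) = 9 * n^5))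
    exact this
  have hcard : (((D ×ˢ D).filter Good).card : ℝ) ≤ 9 * (n : ℝ) ^ 5 := by
    calc (((D ×ˢ D).filter Good).card : ℝ) ≤ ((9 * n ^ 5 : ℕ) : ℝ) := by exact_mod_cast hle
      _ = 9 * (n : ℝ) ^ 5 := by push_cast; ring
  calc ∑ pq ∈ (D ×ˢ D).filter Good, ∫ ω, a pq.1 ω * a pq.2 ω ∂P
      ≤ ∑ pq ∈ (D ×ˢ D).filter Good, c ^ 2 := by
        apply Finset.sum_le_sum
        intro pq _
        have : ‖∫ ω, a pq.1 ω * a pq.2 ω ∂P‖ ≤ c ^ 2 * (P Set.univ).toReal := by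
          apply norm_integral_le_of_norm_le_const
          exact ae_of_all _ fun ω => by
            rw [Real.norm_eq_abs]; exact hprodbd pq.1 pq.2 ω
        rw [measure_univ, ENNReal.toReal_one, mul_one, Real.norm_eq_abs] at this
        exact (le_abs_self _).trans this
    _ = (((D ×ˢ D).filter Good).card : ℝ) * c ^ 2 := by rw [Finset.sum_const, nsmul_eq_mul]
    _ ≤ 9 * (n : ℝ) ^ 5 * c ^ 2 := by
        apply mul_le_mul_of_nonneg_right hcard (sq_nonneg c)
    _ = 9 * c ^ 2 * (n : ℝ) ^ 5 := by ring


lemma my_Vmean2 (hZ : ∀ i, Measurable (Z i)) (hindep : iIndepFun Z P)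
    (hid : ∀ i, IdentDistrib (Z i) (Z 0) P P)
    {f : E → E → ℝ} (hf : Measurable (Function.uncurry f)) {C : ℝ} (hC : ∀ x y, |f x y| ≤ C) :
    ∀ᵐ ω ∂P, Tendsto (fun n : ℕ =>
        (1 / (n : ℝ) ^ 2) * ∑ i ∈ Finset.range n, ∑ j ∈ Finset.range n, f (Z i ω) (Z j ω))
      atTop (𝓝 (∫ x, ∫ y, f x y ∂(P.map (Z 0)) ∂(P.map (Z 0)))) := by
  classical
  set ν := P.map (Z 0) with hν
  haveI : IsProbabilityMeasure ν := Measure.isProbabilityMeasure_map (hZ 0).aemeasurable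
  set m := ∫ x, ∫ y, f x y ∂ν ∂ν with hm
  have hΩ : Nonempty Ω := by
    by_contra hne
    rw [not_nonempty_iff] at hne
    have h1 := measure_univ (μ := P)
    rw [Set.univ_eq_empty_iff.mpr hne, measure_empty] at h1
    exact zero_ne_one h1
  have hE : Nonempty E := ⟨Z 0 hΩ.some⟩
  have hC0 : 0 ≤ C := le_trans (abs_nonneg _) (hC hE.some hE.some)
  have hmabs : |m| ≤ C := by
    rw [hm, ← Real.norm_eq_abs]
    have h1 : ∀ x : E, ‖∫ y, f x y ∂ν‖ ≤ C := fun x => by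
      have := norm_integral_le_of_norm_le_const (μ := ν) (f := fun y => f x y) (C := C)
        (ae_of_all _ fun y => by rw [Real.norm_eq_abs]; exact hC x y)
      rwa [probReal_univ, mul_one] at this
    have := norm_integral_le_of_norm_le_const (μ := ν) (f := fun x => ∫ y, f x y ∂ν) (C := C)
      (ae_of_all _ fun x => h1 x)
    rwa [probReal_univ, mul_one] at this
  set h : E → E → ℝ := fun x y => f x y - m with hh_def
  have hhmeas : Measurable (Function.uncurry h) := hf.sub measurable_const
  set c := C + C with hc_def
  have hc : ∀ x y, |h x y| ≤ c := fun x y => by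
    have h1 : |f x y - m| ≤ |f x y| + |m| := abs_sub _ _
    have := hC x y
    simp only [hh_def]
    linarith
  have hc0 : 0 ≤ c := by linarith
  have hmean : ∀ i j : ℕ, i ≠ j → ∫ ω, h (Z i ω) (Z j ω) ∂P = 0 := by
    intro i j hij
    have hint1 : Integrable (fun ω => f (Z i ω) (Z j ω)) P :=
      my_integrable_of_abs_le (hf.comp ((hZ i).prodMk (hZ j))).aestronglyMeasurable
        (fun ω => hC _ _)
    have he : (fun ω => h (Z i ω) (Z j ω)) = fun ω => f (Z i ω) (Z j ω) - m := rfl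
    rw [he, integral_sub hint1 (integrable_const m),
      my_integral_pair hZ hindep hid hf hC hij, integral_const, probReal_univ,
      one_smul, ← hν, ← hm, sub_self]
  set u : ℕ → Ω → ℝ := fun n ω => ∑ p ∈ (Finset.range n).offDiag, h (Z p.1 ω) (Z p.2 ω) with hu
  have humeas : ∀ n, Measurable (u n) := fun n =>
    Finset.measurable_sum _ (fun p _ => hhmeas.comp ((hZ p.1).prodMk (hZ p.2)))
  have hubd : ∀ n ω, |u n ω| ≤ c * ((Finset.range n).offDiag.card : ℝ) := fun n ω => by
    calc |u n ω| ≤ ∑ p ∈ (Finset.range n).offDiag, |h (Z p.1 ω) (Z p.2 ω)| :=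
          Finset.abs_sum_le_sum_abs _ _
      _ ≤ ∑ p ∈ (Finset.range n).offDiag, c := Finset.sum_le_sum fun p _ => hc _ _
      _ = ((Finset.range n).offDiag.card : ℝ) * c := by rw [Finset.sum_const, nsmul_eq_mul]
      _ = c * ((Finset.range n).offDiag.card : ℝ) := mul_comm _ _
  -- subsequence bound
  have hVbd : ∀ k : ℕ, ∫⁻ ω, ENNReal.ofReal ((u (k ^ 2) ω / (k : ℝ) ^ 4) ^ 2) ∂P
      ≤ ENNReal.ofReal (4 * c ^ 2 / (k : ℝ) ^ 2) := by
    intro k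
    rcases Nat.eq_zero_or_pos k with rfl | hk
    · have hz : ∀ ω : Ω, u (0 ^ 2) ω = 0 := fun ω => by simp [hu]
      simp only [hz]
      simp
    · have hkpos : (0 : ℝ) < (k : ℝ) := by exact_mod_cast hk
      have hksq := my_sq_bound2 hZ hindep hhmeas hc0 hc hmean (k ^ 2)
      have hbd1 : ∀ ω, |(u (k ^ 2) ω / (k : ℝ) ^ 4) ^ 2|
          ≤ (c * (((Finset.range (k ^ 2)).offDiag.card : ℝ)) / (k : ℝ) ^ 4) ^ 2 := fun ω => by
        rw [abs_of_nonneg (sq_nonneg _), ← sq_abs]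
        apply pow_le_pow_left₀ (abs_nonneg _)
        rw [abs_div, abs_of_pos (by positivity : (0:ℝ) < (k:ℝ)^4)]
        apply div_le_div_of_nonneg_right (hubd _ ω) (by positivity)
      have hint2 : Integrable (fun ω => (u (k ^ 2) ω / (k : ℝ) ^ 4) ^ 2) P :=
        my_integrable_of_abs_le
          ((((humeas (k ^ 2)).div_const _).pow_const 2).aestronglyMeasurable) hbd1
      rw [← ofReal_integral_eq_lintegral_ofReal hint2 (ae_of_all _ fun ω => sq_nonneg _)]
      apply ENNReal.ofReal_le_ofReal
      have he2 : (fun ω => (u (k ^ 2) ω / (k : ℝ) ^ 4) ^ 2)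
          = fun ω => (u (k ^ 2) ω) ^ 2 * (((k : ℝ) ^ 4)⁻¹) ^ 2 := by
        funext ω; rw [div_eq_mul_inv, mul_pow]
      rw [he2, integral_mul_const]
      have h2 : ((k ^ 2 : ℕ) : ℝ) = (k : ℝ) ^ 2 := by push_cast; ring
      calc (∫ ω, (u (k ^ 2) ω) ^ 2 ∂P) * (((k : ℝ) ^ 4)⁻¹) ^ 2
          ≤ (4 * c ^ 2 * ((k : ℝ) ^ 2) ^ 3) * (((k : ℝ) ^ 4)⁻¹) ^ 2 := by
            apply mul_le_mul_of_nonneg_right _ (by positivity)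
            rw [← h2]; exact hksq
        _ = 4 * c ^ 2 / (k : ℝ) ^ 2 := by field_simp
  have hsummable : Summable (fun k : ℕ => 4 * c ^ 2 / (k : ℝ) ^ 2) := by
    have he3 : (fun k : ℕ => 4 * c ^ 2 / (k : ℝ) ^ 2)
        = fun k : ℕ => (4 * c ^ 2) * (1 / (k : ℝ) ^ 2) := by
      funext k; rw [mul_one_div]
    rw [he3]
    exact (Real.summable_one_div_nat_pow.2 (le_refl 2)).mul_left _
  have hsubseq := my_ae_tendsto_zero (P := P) (fun k ω => u (k ^ 2) ω / (k : ℝ) ^ 4)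
    (fun k => (humeas (k ^ 2)).div_const _) (fun k => 4 * c ^ 2 / (k : ℝ) ^ 2)
    (fun k => by positivity) hsummable hVbd
  filter_upwards [hsubseq] with ω hω
  -- interpolation
  have hdiff : ∀ m' n' : ℕ, m' ≤ n' → |u n' ω - u m' ω|
      ≤ (2 * c) * (n' : ℝ) ^ (2 - 1) * ((n' : ℝ) - (m' : ℝ)) := by
    intro m' n' hmn
    have hsubD : (Finset.range m').offDiag ⊆ (Finset.range n').offDiag := by
      intro p hp
      rw [Finset.mem_offDiag] at hp ⊢
      exact ⟨Finset.range_subset_range.2 hmn hp.1, Finset.range_subset_range.2 hmn hp.2.1, hp.2.2⟩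
    have hdiffeq : u n' ω - u m' ω = ∑ p ∈ (Finset.range n').offDiag \ (Finset.range m').offDiag,
        h (Z p.1 ω) (Z p.2 ω) := by
      simp only [hu]
      rw [← Finset.sum_sdiff hsubD]
      ring
    have hcard : (((Finset.range n').offDiag \ (Finset.range m').offDiag).card : ℝ)
        ≤ (n' : ℝ) * n' - (m' : ℝ) * m' := by
      have hsub2 : (Finset.range n').offDiag \ (Finset.range m').offDiag
          ⊆ (Finset.range n' ×ˢ Finset.range n') \ (Finset.range m' ×ˢ Finset.range m') := by
        intro p hp
        rw [Finset.mem_sdiff] at hp ⊢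
        obtain ⟨hp1, hp2⟩ := hp
        rw [Finset.mem_offDiag] at hp1
        refine ⟨Finset.mem_product.2 ⟨hp1.1, hp1.2.1⟩, fun hmem => ?_⟩
        exact hp2 (Finset.mem_offDiag.2
          ⟨(Finset.mem_product.1 hmem).1, (Finset.mem_product.1 hmem).2, hp1.2.2⟩)
      have hc2 : ((Finset.range n').offDiag \ (Finset.range m').offDiag).card
          ≤ n' * n' - m' * m' := by
        calc _ ≤ ((Finset.range n' ×ˢ Finset.range n')
              \ (Finset.range m' ×ˢ Finset.range m')).card := Finset.card_le_card hsub2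
          _ = n' * n' - m' * m' := by
            rw [Finset.card_sdiff_of_subset (Finset.product_subset_product
              (Finset.range_subset_range.2 hmn) (Finset.range_subset_range.2 hmn))]
            simp [Finset.card_product]
      calc (((Finset.range n').offDiag \ (Finset.range m').offDiag).card : ℝ)
          ≤ ((n' * n' - m' * m' : ℕ) : ℝ) := by exact_mod_cast hc2
        _ = (n' : ℝ) * n' - (m' : ℝ) * m' := by
            push_cast [Nat.cast_sub (Nat.mul_le_mul hmn hmn)]; ring
    rw [hdiffeq]
    have habs2 : |∑ p ∈ (Finset.range n').offDiag \ (Finset.range m').offDiag,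
        h (Z p.1 ω) (Z p.2 ω)| ≤ c * (((Finset.range n').offDiag \ (Finset.range m').offDiag).card : ℝ) := by
      calc _ ≤ ∑ p ∈ (Finset.range n').offDiag \ (Finset.range m').offDiag,
            |h (Z p.1 ω) (Z p.2 ω)| := Finset.abs_sum_le_sum_abs _ _
        _ ≤ ∑ p ∈ (Finset.range n').offDiag \ (Finset.range m').offDiag, c :=
            Finset.sum_le_sum fun p _ => hc _ _
        _ = _ := by rw [Finset.sum_const, nsmul_eq_mul, mul_comm]
    have hmn' : (m' : ℝ) ≤ (n' : ℝ) := by exact_mod_cast hmn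
    calc |∑ p ∈ (Finset.range n').offDiag \ (Finset.range m').offDiag, h (Z p.1 ω) (Z p.2 ω)|
        ≤ c * ((n' : ℝ) * n' - (m' : ℝ) * m') := habs2.trans (by
          apply mul_le_mul_of_nonneg_left hcard hc0)
      _ ≤ (2 * c) * (n' : ℝ) ^ (2 - 1) * ((n' : ℝ) - (m' : ℝ)) := by
          norm_num
          nlinarith [hc0, hmn', Nat.cast_nonneg (α := ℝ) m',
            mul_nonneg (mul_nonneg hc0 (sub_nonneg.2 hmn')) (sub_nonneg.2 hmn')]
  have hfull : Tendsto (fun n => u n ω / (n : ℝ) ^ 2) atTop (𝓝 0) :=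
    my_interp 2 (by norm_num) (fun n => u n ω) (2 * c) (by linarith) hdiff (by simpa using hω)
  -- assembly
  have key : ∀ n : ℕ, (1 / (n : ℝ) ^ 2) * ∑ i ∈ Finset.range n, ∑ j ∈ Finset.range n,
      f (Z i ω) (Z j ω)
      = u n ω / (n : ℝ) ^ 2 + m * (((Finset.range n).offDiag.card : ℝ)) / (n : ℝ) ^ 2
        + (∑ p ∈ (Finset.range n ×ˢ Finset.range n) \ (Finset.range n).offDiag,
            f (Z p.1 ω) (Z p.2 ω)) / (n : ℝ) ^ 2 := by
    intro n
    have h1 : ∑ i ∈ Finset.range n, ∑ j ∈ Finset.range n, f (Z i ω) (Z j ω)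
        = ∑ p ∈ Finset.range n ×ˢ Finset.range n, f (Z p.1 ω) (Z p.2 ω) := by
      rw [Finset.sum_product]
    have hsubD : (Finset.range n).offDiag ⊆ Finset.range n ×ˢ Finset.range n := fun p hp =>
      Finset.mem_product.2 ⟨(Finset.mem_offDiag.1 hp).1, (Finset.mem_offDiag.1 hp).2.1⟩
    have h2 : ∑ p ∈ Finset.range n ×ˢ Finset.range n, f (Z p.1 ω) (Z p.2 ω)
        = (∑ p ∈ (Finset.range n ×ˢ Finset.range n) \ (Finset.range n).offDiag,
            f (Z p.1 ω) (Z p.2 ω))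
          + ∑ p ∈ (Finset.range n).offDiag, f (Z p.1 ω) (Z p.2 ω) :=
      (Finset.sum_sdiff hsubD).symm
    have h3 : ∑ p ∈ (Finset.range n).offDiag, f (Z p.1 ω) (Z p.2 ω)
        = u n ω + m * (((Finset.range n).offDiag.card : ℝ)) := by
      simp only [hu, hh_def]
      rw [Finset.sum_sub_distrib, Finset.sum_const, nsmul_eq_mul]
      ring
    rw [h1, h2, h3]
    ring
  have ht2 : Tendsto (fun n : ℕ => m * (((Finset.range n).offDiag.card : ℝ)) / (n : ℝ) ^ 2)
      atTop (𝓝 m) := by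
    have hcard_e : ∀ n : ℕ, (((Finset.range n).offDiag.card : ℝ)) = (n : ℝ) ^ 2 - n := by
      intro n
      rw [Finset.offDiag_card, Finset.card_range]
      have hle : n ≤ n * n := by nlinarith
      push_cast [Nat.cast_sub hle]
      ring
    have heq : ∀ᶠ n : ℕ in atTop, m * (((Finset.range n).offDiag.card : ℝ)) / (n : ℝ) ^ 2
        = m * (1 - 1 / (n : ℝ)) := by
      filter_upwards [eventually_ge_atTop 1] with n hn
      have hn0 : (n : ℝ) ≠ 0 := by
        have : (1 : ℝ) ≤ (n : ℝ) := by exact_mod_cast hn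
        linarith
      rw [hcard_e]
      field_simp
    have hlim : Tendsto (fun n : ℕ => m * (1 - 1 / (n : ℝ))) atTop (𝓝 (m * (1 - 0))) :=
      tendsto_const_nhds.mul (tendsto_const_nhds.sub tendsto_one_div_atTop_nhds_zero_nat)
    rw [show m * (1 - 0) = m by ring] at hlim
    exact Tendsto.congr' (by filter_upwards [heq] with n h using h.symm) hlim
  have ht3 : Tendsto (fun n : ℕ => (∑ p ∈ (Finset.range n ×ˢ Finset.range n)
      \ (Finset.range n).offDiag, f (Z p.1 ω) (Z p.2 ω)) / (n : ℝ) ^ 2) atTop (𝓝 0) := by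
    apply squeeze_zero_norm' ?_ (tendsto_const_div_atTop_nhds_zero_nat C)
    filter_upwards [eventually_ge_atTop 1] with n hn
    have hn1 : (1 : ℝ) ≤ (n : ℝ) := by exact_mod_cast hn
    have hnpos : (0 : ℝ) < (n : ℝ) ^ 2 := by positivity
    have hsubD : (Finset.range n).offDiag ⊆ Finset.range n ×ˢ Finset.range n := fun p hp =>
      Finset.mem_product.2 ⟨(Finset.mem_offDiag.1 hp).1, (Finset.mem_offDiag.1 hp).2.1⟩
    have hcard3 : ((Finset.range n ×ˢ Finset.range n) \ (Finset.range n).offDiag).card = n := by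
      rw [Finset.card_sdiff_of_subset hsubD, Finset.card_product, Finset.card_range, Finset.offDiag_card,
        Finset.card_range]
      have : n ≤ n * n := by nlinarith
      omega
    have habs3 : |∑ p ∈ (Finset.range n ×ˢ Finset.range n) \ (Finset.range n).offDiag,
        f (Z p.1 ω) (Z p.2 ω)| ≤ C * n := by
      calc _ ≤ ∑ p ∈ (Finset.range n ×ˢ Finset.range n) \ (Finset.range n).offDiag,
            |f (Z p.1 ω) (Z p.2 ω)| := Finset.abs_sum_le_sum_abs _ _
        _ ≤ ∑ p ∈ (Finset.range n ×ˢ Finset.range n) \ (Finset.range n).offDiag, C :=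
            Finset.sum_le_sum fun p _ => hC _ _
        _ = C * n := by rw [Finset.sum_const, nsmul_eq_mul, hcard3, mul_comm]
    rw [Real.norm_eq_abs, abs_div, abs_of_pos hnpos]
    calc _ ≤ (C * n) / (n : ℝ) ^ 2 := div_le_div_of_nonneg_right habs3 hnpos.le
      _ = C / n := by
          rw [sq, mul_comm C (n : ℝ), mul_div_mul_left _ _ (by linarith : (n : ℝ) ≠ 0)]
  have hcomb := (hfull.add ht2).add ht3
  rw [show (0 : ℝ) + m + 0 = m by ring] at hcomb
  exact Tendsto.congr (fun n => (key n).symm) hcomb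


lemma my_Vmean3 (hZ : ∀ i, Measurable (Z i)) (hindep : iIndepFun Z P)
    (hid : ∀ i, IdentDistrib (Z i) (Z 0) P P)
    {f : E → E → E → ℝ} (hf : Measurable (fun p : E × E × E => f p.1 p.2.1 p.2.2))
    {C : ℝ} (hC : ∀ x y z, |f x y z| ≤ C) :
    ∀ᵐ ω ∂P, Tendsto (fun n : ℕ =>
        (1 / (n : ℝ) ^ 3) * ∑ i ∈ Finset.range n, ∑ j ∈ Finset.range n, ∑ k ∈ Finset.range n,
          f (Z i ω) (Z j ω) (Z k ω))
      atTop (𝓝 (∫ x, ∫ y, ∫ z, f x y z ∂(P.map (Z 0)) ∂(P.map (Z 0)) ∂(P.map (Z 0)))) := by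
  classical
  set ν := P.map (Z 0) with hν
  haveI : IsProbabilityMeasure ν := Measure.isProbabilityMeasure_map (hZ 0).aemeasurable
  set m := ∫ x, ∫ y, ∫ z, f x y z ∂ν ∂ν ∂ν with hm
  have hΩ : Nonempty Ω := by
    by_contra hne
    rw [not_nonempty_iff] at hne
    have h1 := measure_univ (μ := P)
    rw [Set.univ_eq_empty_iff.mpr hne, measure_empty] at h1
    exact zero_ne_one h1
  have hE : Nonempty E := ⟨Z 0 hΩ.some⟩
  have hC0 : 0 ≤ C := le_trans (abs_nonneg _) (hC hE.some hE.some hE.some)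
  have hmabs : |m| ≤ C := by
    rw [hm, ← Real.norm_eq_abs]
    have h0 : ∀ x y : E, ‖∫ z, f x y z ∂ν‖ ≤ C := fun x y => by
      have := norm_integral_le_of_norm_le_const (μ := ν) (f := fun z => f x y z) (C := C)
        (ae_of_all _ fun z => by rw [Real.norm_eq_abs]; exact hC x y z)
      rwa [probReal_univ, mul_one] at this
    have h1 : ∀ x : E, ‖∫ y, ∫ z, f x y z ∂ν ∂ν‖ ≤ C := fun x => by
      have := norm_integral_le_of_norm_le_const (μ := ν) (f := fun y => ∫ z, f x y z ∂ν) (C := C)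
        (ae_of_all _ fun y => h0 x y)
      rwa [probReal_univ, mul_one] at this
    have := norm_integral_le_of_norm_le_const (μ := ν)
      (f := fun x => ∫ y, ∫ z, f x y z ∂ν ∂ν) (C := C) (ae_of_all _ fun x => h1 x)
    rwa [probReal_univ, mul_one] at this
  set h : E → E → E → ℝ := fun x y z => f x y z - m with hh_def
  have hhmeas : Measurable (fun p : E × E × E => h p.1 p.2.1 p.2.2) := hf.sub measurable_const
  set c := C + C with hc_def
  have hc : ∀ x y z, |h x y z| ≤ c := fun x y z => by
    have h1 : |f x y z - m| ≤ |f x y z| + |m| := abs_sub _ _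
    have := hC x y z
    simp only [hh_def]
    linarith
  have hc0 : 0 ≤ c := by linarith
  have hmean : ∀ i j k : ℕ, i ≠ j → i ≠ k → j ≠ k →
      ∫ ω, h (Z i ω) (Z j ω) (Z k ω) ∂P = 0 := by
    intro i j k hij hik hjk
    have hint1 : Integrable (fun ω => f (Z i ω) (Z j ω) (Z k ω)) P :=
      my_integrable_of_abs_le
        (hf.comp ((hZ i).prodMk ((hZ j).prodMk (hZ k)))).aestronglyMeasurable
        (fun ω => hC _ _ _)
    have he : (fun ω => h (Z i ω) (Z j ω) (Z k ω))
        = fun ω => f (Z i ω) (Z j ω) (Z k ω) - m := rfl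
    rw [he, integral_sub hint1 (integrable_const m),
      my_integral_triple hZ hindep hid hf hC hij hik hjk, integral_const, probReal_univ,
      one_smul, ← hν, ← hm, sub_self]
  set D : ℕ → Finset (ℕ × ℕ × ℕ) := fun n =>
    (Finset.range n ×ˢ (Finset.range n ×ˢ Finset.range n)).filter
      (fun t => t.1 ≠ t.2.1 ∧ t.1 ≠ t.2.2 ∧ t.2.1 ≠ t.2.2) with hD
  set u : ℕ → Ω → ℝ := fun n ω => ∑ t ∈ D n, h (Z t.1 ω) (Z t.2.1 ω) (Z t.2.2 ω) with hu
  have humeas : ∀ n, Measurable (u n) := fun n =>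
    Finset.measurable_sum _ (fun t _ =>
      hhmeas.comp ((hZ t.1).prodMk ((hZ t.2.1).prodMk (hZ t.2.2))))
  have hubd : ∀ n ω, |u n ω| ≤ c * ((D n).card : ℝ) := fun n ω => by
    calc |u n ω| ≤ ∑ t ∈ D n, |h (Z t.1 ω) (Z t.2.1 ω) (Z t.2.2 ω)| :=
          Finset.abs_sum_le_sum_abs _ _
      _ ≤ ∑ t ∈ D n, c := Finset.sum_le_sum fun t _ => hc _ _ _
      _ = ((D n).card : ℝ) * c := by rw [Finset.sum_const, nsmul_eq_mul]
      _ = c * ((D n).card : ℝ) := mul_comm _ _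
  have hVbd : ∀ k : ℕ, ∫⁻ ω, ENNReal.ofReal ((u (k ^ 2) ω / (k : ℝ) ^ 6) ^ 2) ∂P
      ≤ ENNReal.ofReal (9 * c ^ 2 / (k : ℝ) ^ 2) := by
    intro k
    rcases Nat.eq_zero_or_pos k with rfl | hk
    · have hz : ∀ ω : Ω, u (0 ^ 2) ω = 0 := fun ω => by simp [hu, hD]
      simp only [hz]
      simp
    · have hkpos : (0 : ℝ) < (k : ℝ) := by exact_mod_cast hk
      have hksq := my_sq_bound3 hZ hindep hhmeas hc0 hc hmean (k ^ 2)
      have hbd1 : ∀ ω, |(u (k ^ 2) ω / (k : ℝ) ^ 6) ^ 2|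
          ≤ (c * (((D (k ^ 2)).card : ℝ)) / (k : ℝ) ^ 6) ^ 2 := fun ω => by
        rw [abs_of_nonneg (sq_nonneg _), ← sq_abs]
        apply pow_le_pow_left₀ (abs_nonneg _)
        rw [abs_div, abs_of_pos (by positivity : (0:ℝ) < (k:ℝ)^6)]
        apply div_le_div_of_nonneg_right (hubd _ ω) (by positivity)
      have hint2 : Integrable (fun ω => (u (k ^ 2) ω / (k : ℝ) ^ 6) ^ 2) P :=
        my_integrable_of_abs_le
          ((((humeas (k ^ 2)).div_const _).pow_const 2).aestronglyMeasurable) hbd1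
      rw [← ofReal_integral_eq_lintegral_ofReal hint2 (ae_of_all _ fun ω => sq_nonneg _)]
      apply ENNReal.ofReal_le_ofReal
      have he2 : (fun ω => (u (k ^ 2) ω / (k : ℝ) ^ 6) ^ 2)
          = fun ω => (u (k ^ 2) ω) ^ 2 * (((k : ℝ) ^ 6)⁻¹) ^ 2 := by
        funext ω; rw [div_eq_mul_inv, mul_pow]
      rw [he2, integral_mul_const]
      have h2 : ((k ^ 2 : ℕ) : ℝ) = (k : ℝ) ^ 2 := by push_cast; ring
      calc (∫ ω, (u (k ^ 2) ω) ^ 2 ∂P) * (((k : ℝ) ^ 6)⁻¹) ^ 2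
          ≤ (9 * c ^ 2 * ((k : ℝ) ^ 2) ^ 5) * (((k : ℝ) ^ 6)⁻¹) ^ 2 := by
            apply mul_le_mul_of_nonneg_right _ (by positivity)
            rw [← h2]
            exact hksq
        _ = 9 * c ^ 2 / (k : ℝ) ^ 2 := by field_simp
  have hsummable : Summable (fun k : ℕ => 9 * c ^ 2 / (k : ℝ) ^ 2) := by
    have he3 : (fun k : ℕ => 9 * c ^ 2 / (k : ℝ) ^ 2)
        = fun k : ℕ => (9 * c ^ 2) * (1 / (k : ℝ) ^ 2) := by
      funext k; rw [mul_one_div]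
    rw [he3]
    exact (Real.summable_one_div_nat_pow.2 (le_refl 2)).mul_left _
  have hsubseq := my_ae_tendsto_zero (P := P) (fun k ω => u (k ^ 2) ω / (k : ℝ) ^ 6)
    (fun k => (humeas (k ^ 2)).div_const _) (fun k => 9 * c ^ 2 / (k : ℝ) ^ 2)
    (fun k => by positivity) hsummable hVbd
  -- counting of non-distinct triples
  have hTD : ∀ n : ℕ, ((Finset.range n ×ˢ (Finset.range n ×ˢ Finset.range n)) \ D n).card
      ≤ 3 * n ^ 2 := by
    intro n
    have hfn : (Finset.range n ×ˢ (Finset.range n ×ˢ Finset.range n)) \ D n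
        = (Finset.range n ×ˢ (Finset.range n ×ˢ Finset.range n)).filter
          (fun t => ¬(t.1 ≠ t.2.1 ∧ t.1 ≠ t.2.2 ∧ t.2.1 ≠ t.2.2)) := by
      rw [hD, Finset.filter_not]
    have hiff : (Finset.range n ×ˢ (Finset.range n ×ˢ Finset.range n)).filter
          (fun t => ¬(t.1 ≠ t.2.1 ∧ t.1 ≠ t.2.2 ∧ t.2.1 ≠ t.2.2))
        = (Finset.range n ×ˢ (Finset.range n ×ˢ Finset.range n)).filter
          (fun t => t.1 = t.2.1 ∨ (t.1 = t.2.2 ∨ t.2.1 = t.2.2)) := by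
      apply Finset.filter_congr
      intro t _
      constructor
      · intro hx; by_contra hy; push_neg at hy; exact hx ⟨hy.1, hy.2.1, hy.2.2⟩
      · intro hx hy; rcases hx with h | h | h
        · exact hy.1 h
        · exact hy.2.1 h
        · exact hy.2.2 h
    have hcard_t : ((Finset.range n ×ˢ Finset.range n).card) = n ^ 2 := by
      simp [Finset.card_product]; ring
    have hb1 : ((Finset.range n ×ˢ (Finset.range n ×ˢ Finset.range n)).filter
        (fun t => t.1 = t.2.1)).card ≤ n ^ 2 := by
      rw [← hcard_t]
      apply Finset.card_le_card_of_injOn (fun t => (t.2.1, t.2.2))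
      · rintro ⟨t1, t2, t3⟩ hmem
        simp only [Finset.mem_coe, Finset.mem_filter, Finset.mem_product, Finset.mem_range] at hmem ⊢
        omega
      · rintro ⟨t1, t2, t3⟩ hm1 ⟨t1', t2', t3'⟩ hm2 heq
        simp only [Finset.mem_coe, Finset.mem_filter, Finset.mem_product,
          Finset.mem_range] at hm1 hm2
        simp only [Prod.mk.injEq] at heq ⊢
        omega
    have hb2 : ((Finset.range n ×ˢ (Finset.range n ×ˢ Finset.range n)).filter
        (fun t => t.1 = t.2.2)).card ≤ n ^ 2 := by
      rw [← hcard_t]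
      apply Finset.card_le_card_of_injOn (fun t => (t.1, t.2.1))
      · rintro ⟨t1, t2, t3⟩ hmem
        simp only [Finset.mem_coe, Finset.mem_filter, Finset.mem_product, Finset.mem_range] at hmem ⊢
        omega
      · rintro ⟨t1, t2, t3⟩ hm1 ⟨t1', t2', t3'⟩ hm2 heq
        simp only [Finset.mem_coe, Finset.mem_filter, Finset.mem_product,
          Finset.mem_range] at hm1 hm2
        simp only [Prod.mk.injEq] at heq ⊢
        omega
    have hb3 : ((Finset.range n ×ˢ (Finset.range n ×ˢ Finset.range n)).filter
        (fun t => t.2.1 = t.2.2)).card ≤ n ^ 2 := by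
      rw [← hcard_t]
      apply Finset.card_le_card_of_injOn (fun t => (t.1, t.2.1))
      · rintro ⟨t1, t2, t3⟩ hmem
        simp only [Finset.mem_coe, Finset.mem_filter, Finset.mem_product, Finset.mem_range] at hmem ⊢
        omega
      · rintro ⟨t1, t2, t3⟩ hm1 ⟨t1', t2', t3'⟩ hm2 heq
        simp only [Finset.mem_coe, Finset.mem_filter, Finset.mem_product,
          Finset.mem_range] at hm1 hm2
        simp only [Prod.mk.injEq] at heq ⊢
        omega
    rw [hfn, hiff]
    calc _ ≤ n ^ 2 + (n ^ 2 + n ^ 2) := my_card_or _ _ _ hb1 (my_card_or _ _ _ hb2 hb3)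
      _ = 3 * n ^ 2 := by ring
  have hDsubT : ∀ n : ℕ, D n ⊆ Finset.range n ×ˢ (Finset.range n ×ˢ Finset.range n) :=
    fun n => by rw [hD]; exact Finset.filter_subset _ _
  have hcardT : ∀ n : ℕ, (Finset.range n ×ˢ (Finset.range n ×ˢ Finset.range n)).card
      = n ^ 3 := fun n => by simp [Finset.card_product]; ring
  filter_upwards [hsubseq] with ω hω
  -- interpolation
  have hdiff : ∀ m' n' : ℕ, m' ≤ n' → |u n' ω - u m' ω|
      ≤ (3 * c) * (n' : ℝ) ^ (3 - 1) * ((n' : ℝ) - (m' : ℝ)) := by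
    intro m' n' hmn
    have hTsub : Finset.range m' ×ˢ (Finset.range m' ×ˢ Finset.range m')
        ⊆ Finset.range n' ×ˢ (Finset.range n' ×ˢ Finset.range n') :=
      Finset.product_subset_product (Finset.range_subset_range.2 hmn)
        (Finset.product_subset_product (Finset.range_subset_range.2 hmn) (Finset.range_subset_range.2 hmn))
    have hsubD : D m' ⊆ D n' := by
      rw [hD]
      exact Finset.filter_subset_filter _ hTsub
    have hdiffeq : u n' ω - u m' ω = ∑ t ∈ D n' \ D m',
        h (Z t.1 ω) (Z t.2.1 ω) (Z t.2.2 ω) := by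
      simp only [hu]
      rw [← Finset.sum_sdiff hsubD]
      ring
    have hsub2 : D n' \ D m' ⊆ (Finset.range n' ×ˢ (Finset.range n' ×ˢ Finset.range n'))
        \ (Finset.range m' ×ˢ (Finset.range m' ×ˢ Finset.range m')) := by
      intro t ht
      rw [Finset.mem_sdiff] at ht ⊢
      obtain ⟨ht1, ht2⟩ := ht
      have ht1' := ht1
      simp only [hD, Finset.mem_filter] at ht1'
      refine ⟨hDsubT n' ht1, fun hmem => ht2 ?_⟩
      simp only [hD, Finset.mem_filter]
      exact ⟨hmem, ht1'.2⟩
    have hc2 : (D n' \ D m').card ≤ n' ^ 3 - m' ^ 3 := by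
      calc _ ≤ ((Finset.range n' ×ˢ (Finset.range n' ×ˢ Finset.range n'))
            \ (Finset.range m' ×ˢ (Finset.range m' ×ˢ Finset.range m'))).card :=
            Finset.card_le_card hsub2
        _ = n' ^ 3 - m' ^ 3 := by rw [Finset.card_sdiff_of_subset hTsub, hcardT, hcardT]
    have hcard : ((D n' \ D m').card : ℝ) ≤ (n' : ℝ) ^ 3 - (m' : ℝ) ^ 3 := by
      calc ((D n' \ D m').card : ℝ) ≤ ((n' ^ 3 - m' ^ 3 : ℕ) : ℝ) := by exact_mod_cast hc2
        _ = (n' : ℝ) ^ 3 - (m' : ℝ) ^ 3 := by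
            push_cast [Nat.cast_sub (Nat.pow_le_pow_left hmn 3)]; ring
    rw [hdiffeq]
    have habs2 : |∑ t ∈ D n' \ D m', h (Z t.1 ω) (Z t.2.1 ω) (Z t.2.2 ω)|
        ≤ c * ((D n' \ D m').card : ℝ) := by
      calc _ ≤ ∑ t ∈ D n' \ D m', |h (Z t.1 ω) (Z t.2.1 ω) (Z t.2.2 ω)| :=
            Finset.abs_sum_le_sum_abs _ _
        _ ≤ ∑ t ∈ D n' \ D m', c := Finset.sum_le_sum fun t _ => hc _ _ _
        _ = _ := by rw [Finset.sum_const, nsmul_eq_mul, mul_comm]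
    have hmn' : (m' : ℝ) ≤ (n' : ℝ) := by exact_mod_cast hmn
    have hm0 : (0 : ℝ) ≤ (m' : ℝ) := Nat.cast_nonneg _
    calc |∑ t ∈ D n' \ D m', h (Z t.1 ω) (Z t.2.1 ω) (Z t.2.2 ω)|
        ≤ c * ((n' : ℝ) ^ 3 - (m' : ℝ) ^ 3) := habs2.trans (by
          apply mul_le_mul_of_nonneg_left hcard hc0)
      _ ≤ (3 * c) * (n' : ℝ) ^ (3 - 1) * ((n' : ℝ) - (m' : ℝ)) := by
          norm_num
          nlinarith [hc0, hmn', hm0, sq_nonneg ((n' : ℝ) - (m' : ℝ)),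
            mul_nonneg (mul_nonneg hc0 (sub_nonneg.2 hmn')) (sub_nonneg.2 hmn'),
            mul_nonneg (mul_nonneg (mul_nonneg hc0 (sub_nonneg.2 hmn')) (sub_nonneg.2 hmn')) hm0,
            mul_nonneg (mul_nonneg hc0 (mul_self_nonneg ((n' : ℝ) - (m' : ℝ)))) hm0]
  have hfull : Tendsto (fun n => u n ω / (n : ℝ) ^ 3) atTop (𝓝 0) :=
    my_interp 3 (by norm_num) (fun n => u n ω) (3 * c) (by linarith) hdiff (by
      have : (2 * 3 : ℕ) = 6 := by norm_num
      rw [this]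
      exact hω)
  -- assembly
  have key : ∀ n : ℕ, (1 / (n : ℝ) ^ 3) * ∑ i ∈ Finset.range n, ∑ j ∈ Finset.range n,
      ∑ k ∈ Finset.range n, f (Z i ω) (Z j ω) (Z k ω)
      = u n ω / (n : ℝ) ^ 3 + m * (((D n).card : ℝ)) / (n : ℝ) ^ 3
        + (∑ t ∈ (Finset.range n ×ˢ (Finset.range n ×ˢ Finset.range n)) \ D n,
            f (Z t.1 ω) (Z t.2.1 ω) (Z t.2.2 ω)) / (n : ℝ) ^ 3 := by
    intro n
    have h1 : ∑ i ∈ Finset.range n, ∑ j ∈ Finset.range n, ∑ k ∈ Finset.range n,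
        f (Z i ω) (Z j ω) (Z k ω)
        = ∑ t ∈ Finset.range n ×ˢ (Finset.range n ×ˢ Finset.range n),
            f (Z t.1 ω) (Z t.2.1 ω) (Z t.2.2 ω) := by
      rw [Finset.sum_product]
      apply Finset.sum_congr rfl
      intro i _
      rw [Finset.sum_product]
    have h2 : ∑ t ∈ Finset.range n ×ˢ (Finset.range n ×ˢ Finset.range n),
        f (Z t.1 ω) (Z t.2.1 ω) (Z t.2.2 ω)
        = (∑ t ∈ (Finset.range n ×ˢ (Finset.range n ×ˢ Finset.range n)) \ D n,
            f (Z t.1 ω) (Z t.2.1 ω) (Z t.2.2 ω))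
          + ∑ t ∈ D n, f (Z t.1 ω) (Z t.2.1 ω) (Z t.2.2 ω) :=
      (Finset.sum_sdiff (hDsubT n)).symm
    have h3 : ∑ t ∈ D n, f (Z t.1 ω) (Z t.2.1 ω) (Z t.2.2 ω)
        = u n ω + m * (((D n).card : ℝ)) := by
      simp only [hu, hh_def]
      rw [Finset.sum_sub_distrib, Finset.sum_const, nsmul_eq_mul]
      ring
    rw [h1, h2, h3]
    ring
  have ht2 : Tendsto (fun n : ℕ => m * (((D n).card : ℝ)) / (n : ℝ) ^ 3) atTop (𝓝 m) := by
    have hratio : Tendsto (fun n : ℕ => (((D n).card : ℝ)) / (n : ℝ) ^ 3) atTop (𝓝 1) := by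
      apply tendsto_of_tendsto_of_tendsto_of_le_of_le'
        (g := fun n : ℕ => 1 - 3 / (n : ℝ)) (h := fun _ : ℕ => (1 : ℝ))
      · have : Tendsto (fun n : ℕ => 1 - 3 / (n : ℝ)) atTop (𝓝 (1 - 0)) :=
          tendsto_const_nhds.sub (tendsto_const_div_atTop_nhds_zero_nat 3)
        simpa using this
      · exact tendsto_const_nhds
      · filter_upwards [eventually_ge_atTop 1] with n hn
        have hn1 : (1 : ℝ) ≤ (n : ℝ) := by exact_mod_cast hn
        have hn0 : (n : ℝ) ≠ 0 := by linarith
        have hD_eq : ((D n).card : ℝ) = (n : ℝ) ^ 3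
            - (((Finset.range n ×ˢ (Finset.range n ×ˢ Finset.range n)) \ D n).card : ℝ) := by
          have := Finset.card_sdiff_of_subset (hDsubT n)
          have hDle := Finset.card_le_card (hDsubT n)
          rw [hcardT] at this hDle
          have : ((Finset.range n ×ˢ (Finset.range n ×ˢ Finset.range n)) \ D n).card
              = n ^ 3 - (D n).card := this
          rw [this]
          push_cast [Nat.cast_sub hDle]
          ring
        have hTDr : (((Finset.range n ×ˢ (Finset.range n ×ˢ Finset.range n)) \ D n).card : ℝ)
            ≤ 3 * (n : ℝ) ^ 2 := by
          calc _ ≤ ((3 * n ^ 2 : ℕ) : ℝ) := by exact_mod_cast hTD n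
            _ = 3 * (n : ℝ) ^ 2 := by push_cast; ring
        rw [hD_eq, le_div_iff₀ (by positivity : (0:ℝ) < (n:ℝ)^3)]
        have e : (1 - 3 / (n:ℝ)) * (n:ℝ)^3 = (n:ℝ)^3 - 3*(n:ℝ)^2 := by field_simp
        rw [e]
        linarith [hTDr]
      · filter_upwards [eventually_ge_atTop 1] with n hn
        have hn1 : (1 : ℝ) ≤ (n : ℝ) := by exact_mod_cast hn
        have hDle : ((D n).card : ℝ) ≤ (n : ℝ) ^ 3 := by
          have := Finset.card_le_card (hDsubT n)
          rw [hcardT] at this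
          calc ((D n).card : ℝ) ≤ ((n ^ 3 : ℕ) : ℝ) := by exact_mod_cast this
            _ = (n : ℝ) ^ 3 := by push_cast; ring
        rw [div_le_one (by positivity)]
        exact hDle
    have := Tendsto.mul (tendsto_const_nhds : Tendsto (fun _ : ℕ => m) atTop (𝓝 m)) hratio
    rw [mul_one] at this
    apply this.congr
    intro n
    rw [mul_div_assoc]
  have ht3 : Tendsto (fun n : ℕ => (∑ t ∈ (Finset.range n ×ˢ (Finset.range n ×ˢ Finset.range n))
      \ D n, f (Z t.1 ω) (Z t.2.1 ω) (Z t.2.2 ω)) / (n : ℝ) ^ 3) atTop (𝓝 0) := by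
    apply squeeze_zero_norm' ?_ (tendsto_const_div_atTop_nhds_zero_nat (3 * C))
    filter_upwards [eventually_ge_atTop 1] with n hn
    have hn1 : (1 : ℝ) ≤ (n : ℝ) := by exact_mod_cast hn
    have hnpos : (0 : ℝ) < (n : ℝ) ^ 3 := by positivity
    have habs3 : |∑ t ∈ (Finset.range n ×ˢ (Finset.range n ×ˢ Finset.range n)) \ D n,
        f (Z t.1 ω) (Z t.2.1 ω) (Z t.2.2 ω)| ≤ C * (3 * (n : ℝ) ^ 2) := by
      have hTDr : ((((Finset.range n ×ˢ (Finset.range n ×ˢ Finset.range n)) \ D n).card : ℝ))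
          ≤ 3 * (n : ℝ) ^ 2 := by
        calc _ ≤ ((3 * n ^ 2 : ℕ) : ℝ) := by exact_mod_cast hTD n
          _ = 3 * (n : ℝ) ^ 2 := by push_cast; ring
      calc _ ≤ ∑ t ∈ (Finset.range n ×ˢ (Finset.range n ×ˢ Finset.range n)) \ D n,
            |f (Z t.1 ω) (Z t.2.1 ω) (Z t.2.2 ω)| := Finset.abs_sum_le_sum_abs _ _
        _ ≤ ∑ t ∈ (Finset.range n ×ˢ (Finset.range n ×ˢ Finset.range n)) \ D n, C :=
            Finset.sum_le_sum fun t _ => hC _ _ _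
        _ = ((((Finset.range n ×ˢ (Finset.range n ×ˢ Finset.range n)) \ D n).card : ℝ)) * C := by
            rw [Finset.sum_const, nsmul_eq_mul]
        _ ≤ C * (3 * (n : ℝ) ^ 2) := by
            rw [mul_comm]
            exact mul_le_mul_of_nonneg_left hTDr hC0
    rw [Real.norm_eq_abs, abs_div, abs_of_pos hnpos]
    calc _ ≤ (C * (3 * (n : ℝ) ^ 2)) / (n : ℝ) ^ 3 := div_le_div_of_nonneg_right habs3 hnpos.le
      _ = 3 * C / n := by
          have hn0 : (n : ℝ) ≠ 0 := by linarith
          field_simp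
  have hcomb := (hfull.add ht2).add ht3
  rw [show (0 : ℝ) + m + 0 = m by ring] at hcomb
  exact Tendsto.congr (fun n => (key n).symm) hcomb

end Core

end Auxiliary

/-- The unit sphere `S^d = {x ∈ ℝ^{d+1} : ‖x‖ = 1}` with the Euclidean norm. -/
abbrev UnitSphere (d : ℕ) : Type :=
  Metric.sphere (0 : EuclideanSpace ℝ (Fin (d + 1))) 1

/-- The empirical distance covariance `V_{n,X,Y}`. -/
def Vstat {α β : Type*} (K1 : α → α → ℝ) (K2 : β → β → ℝ)
    (n : ℕ) (x : Fin n → α) (y : Fin n → β) : ℝ :=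
  (1 / (n : ℝ) ^ 2) * ∑ i, ∑ j, K1 (x i) (x j) * K2 (y i) (y j)
    + (1 / (n : ℝ) ^ 4) * (∑ i, ∑ j, K1 (x i) (x j)) * (∑ i, ∑ j, K2 (y i) (y j))
    - (2 / (n : ℝ) ^ 3) * ∑ i, ∑ j, ∑ k, K1 (x i) (x j) * K2 (y i) (y k)

/-- Kernel-induced population distance covariance, via the joint law `μ` of `(X,Y)`. -/
def dCov2 {α β : Type*} [MeasurableSpace α] [MeasurableSpace β]
    (K1 : α → α → ℝ) (K2 : β → β → ℝ) (μ : Measure (α × β)) : ℝ :=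
  (∫ p, (∫ q, K1 p.1 q.1 * K2 p.2 q.2 ∂μ) ∂μ)
    + (∫ p, (∫ q, K1 p.1 q.1 ∂μ) ∂μ) * (∫ p, (∫ q, K2 p.2 q.2 ∂μ) ∂μ)
    - 2 * ∫ p, (∫ q, (∫ r, K1 p.1 q.1 * K2 p.2 r.2 ∂μ) ∂μ) ∂μ

/-- For i.i.d. random elements `(X_i,Y_i)` of `S^{d1} × S^{d2}` and bounded measurable
symmetric kernels, the empirical distance covariance `V_{n,X,Y}` converges almost
surely to the population distance covariance `dCov²_K(X,Y)`. -/
theorem Vstat_tendsto_dCov2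
    (d1 d2 : ℕ) (hd1 : 1 ≤ d1) (hd2 : 1 ≤ d2)
    (K1 : UnitSphere d1 → UnitSphere d1 → ℝ) (K2 : UnitSphere d2 → UnitSphere d2 → ℝ)
    (hK1meas : Measurable (Function.uncurry K1)) (hK2meas : Measurable (Function.uncurry K2))
    (hK1bdd : ∃ C, ∀ x y, |K1 x y| ≤ C) (hK2bdd : ∃ C, ∀ x y, |K2 x y| ≤ C)
    (hK1symm : ∀ x y, K1 x y = K1 y x) (hK2symm : ∀ x y, K2 x y = K2 y x)
    {Ω : Type*} [MeasurableSpace Ω] (P : Measure Ω) [IsProbabilityMeasure P]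
    (X : ℕ → Ω → UnitSphere d1) (Y : ℕ → Ω → UnitSphere d2)
    (hXmeas : ∀ i, Measurable (X i)) (hYmeas : ∀ i, Measurable (Y i))
    (hindep : iIndepFun (fun i ω => (X i ω, Y i ω)) P)
    (hid : ∀ i, IdentDistrib (fun ω => (X i ω, Y i ω)) (fun ω => (X 0 ω, Y 0 ω)) P P) :
    ∀ᵐ ω ∂P,
      Tendsto (fun n : ℕ => Vstat K1 K2 n (fun i : Fin n => X i ω) (fun i : Fin n => Y i ω))
        atTop
        (nhds (dCov2 K1 K2 (Measure.map (fun ω => (X 0 ω, Y 0 ω)) P))) := by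
  classical
  set E := UnitSphere d1 × UnitSphere d2
  set Z : ℕ → Ω → E := fun i ω => (X i ω, Y i ω) with hZ
  have hZmeas : ∀ i, Measurable (Z i) := fun i => (hXmeas i).prodMk (hYmeas i)
  obtain ⟨C1, hC1⟩ := hK1bdd
  obtain ⟨C2, hC2⟩ := hK2bdd
  have hsph1 : Nonempty (UnitSphere d1) := by
    refine Set.Nonempty.to_subtype ?_
    rw [NormedSpace.sphere_nonempty]
    norm_num
  have hsph2 : Nonempty (UnitSphere d2) := by
    refine Set.Nonempty.to_subtype ?_
    rw [NormedSpace.sphere_nonempty]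
    norm_num
  have hC10 : 0 ≤ C1 := le_trans (abs_nonneg _) (hC1 hsph1.some hsph1.some)
  have hC20 : 0 ≤ C2 := le_trans (abs_nonneg _) (hC2 hsph2.some hsph2.some)
  -- kernels on E
  set f1 : E → E → ℝ := fun p q => K1 p.1 q.1 * K2 p.2 q.2 with hf1_def
  set f2 : E → E → ℝ := fun p q => K1 p.1 q.1 with hf2_def
  set f3 : E → E → ℝ := fun p q => K2 p.2 q.2 with hf3_def
  set F : E → E → E → ℝ := fun p q r => K1 p.1 q.1 * K2 p.2 r.2 with hF_def
  have hm2 : Measurable (Function.uncurry f2) :=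
    hK1meas.comp (measurable_fst.fst.prodMk measurable_snd.fst)
  have hm3 : Measurable (Function.uncurry f3) :=
    hK2meas.comp (measurable_fst.snd.prodMk measurable_snd.snd)
  have hm1 : Measurable (Function.uncurry f1) := hm2.mul hm3
  have hmF : Measurable (fun p : E × E × E => F p.1 p.2.1 p.2.2) :=
    (hK1meas.comp (measurable_fst.fst.prodMk measurable_snd.fst.fst)).mul
      (hK2meas.comp (measurable_fst.snd.prodMk measurable_snd.snd.snd))
  have hb1 : ∀ x y : E, |f1 x y| ≤ C1 * C2 := fun x y => by
    rw [hf1_def]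
    simp only []
    rw [abs_mul]
    exact mul_le_mul (hC1 _ _) (hC2 _ _) (abs_nonneg _) hC10
  have hb2 : ∀ x y : E, |f2 x y| ≤ C1 := fun x y => hC1 _ _
  have hb3 : ∀ x y : E, |f3 x y| ≤ C2 := fun x y => hC2 _ _
  have hbF : ∀ x y z : E, |F x y z| ≤ C1 * C2 := fun x y z => by
    rw [hF_def]
    simp only []
    rw [abs_mul]
    exact mul_le_mul (hC1 _ _) (hC2 _ _) (abs_nonneg _) hC10
  have H1 := my_Vmean2 hZmeas hindep hid hm1 hb1
  have H2 := my_Vmean2 hZmeas hindep hid hm2 hb2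
  have H3 := my_Vmean2 hZmeas hindep hid hm3 hb3
  have H4 := my_Vmean3 hZmeas hindep hid hmF hbF
  filter_upwards [H1, H2, H3, H4] with ω h1 h2 h3 h4
  have hkey2 : ∀ (g : ℕ → ℕ → ℝ) (n : ℕ),
      (∑ i : Fin n, ∑ j : Fin n, g i.1 j.1)
        = ∑ i ∈ Finset.range n, ∑ j ∈ Finset.range n, g i j := by
    intro g n
    rw [Fin.sum_univ_eq_sum_range (fun i => ∑ j : Fin n, g i j.1) n]
    exact Finset.sum_congr rfl fun i _ => Fin.sum_univ_eq_sum_range (fun j => g i j) n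
  have hkey3 : ∀ (g : ℕ → ℕ → ℕ → ℝ) (n : ℕ),
      (∑ i : Fin n, ∑ j : Fin n, ∑ k : Fin n, g i.1 j.1 k.1)
        = ∑ i ∈ Finset.range n, ∑ j ∈ Finset.range n, ∑ k ∈ Finset.range n, g i j k := by
    intro g n
    rw [Fin.sum_univ_eq_sum_range (fun i => ∑ j : Fin n, ∑ k : Fin n, g i j.1 k.1) n]
    exact Finset.sum_congr rfl fun i _ => hkey2 (g i) n
  have hconv : ∀ n : ℕ,
      Vstat K1 K2 n (fun i : Fin n => X i ω) (fun i : Fin n => Y i ω)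
      = (1 / (n : ℝ) ^ 2) * (∑ i ∈ Finset.range n, ∑ j ∈ Finset.range n, f1 (Z i ω) (Z j ω))
        + ((1 / (n : ℝ) ^ 2) * (∑ i ∈ Finset.range n, ∑ j ∈ Finset.range n, f2 (Z i ω) (Z j ω)))
          * ((1 / (n : ℝ) ^ 2) * (∑ i ∈ Finset.range n, ∑ j ∈ Finset.range n, f3 (Z i ω) (Z j ω)))
        - 2 * ((1 / (n : ℝ) ^ 3) * (∑ i ∈ Finset.range n, ∑ j ∈ Finset.range n,
            ∑ k ∈ Finset.range n, F (Z i ω) (Z j ω) (Z k ω))) := by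
    intro n
    rw [Vstat]
    rw [show (∑ i : Fin n, ∑ j : Fin n,
        K1 (X i.1 ω) (X j.1 ω) * K2 (Y i.1 ω) (Y j.1 ω))
      = ∑ i ∈ Finset.range n, ∑ j ∈ Finset.range n, f1 (Z i ω) (Z j ω) from
      hkey2 (fun i j => f1 (Z i ω) (Z j ω)) n]
    rw [show (∑ i : Fin n, ∑ j : Fin n, K1 (X i.1 ω) (X j.1 ω))
      = ∑ i ∈ Finset.range n, ∑ j ∈ Finset.range n, f2 (Z i ω) (Z j ω) from
      hkey2 (fun i j => f2 (Z i ω) (Z j ω)) n]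
    rw [show (∑ i : Fin n, ∑ j : Fin n, K2 (Y i.1 ω) (Y j.1 ω))
      = ∑ i ∈ Finset.range n, ∑ j ∈ Finset.range n, f3 (Z i ω) (Z j ω) from
      hkey2 (fun i j => f3 (Z i ω) (Z j ω)) n]
    rw [show (∑ i : Fin n, ∑ j : Fin n, ∑ k : Fin n,
        K1 (X i.1 ω) (X j.1 ω) * K2 (Y i.1 ω) (Y k.1 ω))
      = ∑ i ∈ Finset.range n, ∑ j ∈ Finset.range n, ∑ k ∈ Finset.range n,
          F (Z i ω) (Z j ω) (Z k ω) from
      hkey3 (fun i j k => F (Z i ω) (Z j ω) (Z k ω)) n]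
    ring
  have hcomb := (h1.add (h2.mul h3)).sub (h4.const_mul 2)
  have hfin := Tendsto.congr (fun n => (hconv n).symm) hcomb
  have hgoal : dCov2 K1 K2 (Measure.map (fun ω => (X 0 ω, Y 0 ω)) P)
      = (∫ x, ∫ y, f1 x y ∂(P.map (Z 0)) ∂(P.map (Z 0)))
        + (∫ x, ∫ y, f2 x y ∂(P.map (Z 0)) ∂(P.map (Z 0)))
          * (∫ x, ∫ y, f3 x y ∂(P.map (Z 0)) ∂(P.map (Z 0)))
        - 2 * (∫ x, ∫ y, ∫ z, F x y z ∂(P.map (Z 0)) ∂(P.map (Z 0)) ∂(P.map (Z 0))) := rfl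
  rw [hgoal]
  exact hfin
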